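/- Let m > 0 and Ω ∈ ℝ. Let f : ℝ → ℝ be differentiable on (−∞, Ω) and satisfy the Riccati differential inequality f'(t) ≥ (2/m) · f(t)² for all t < Ω. Then f(t) ≥ 0 for all t < Ω. -/

import Mathlib

/-- If `f` is differentiable on `(-∞, Ω)` and satisfies the Riccati differential
inequality `f' ≥ (2/m) f²` there (with `m > 0`), then `f ≥ 0` on `(-∞, Ω)`. -/
theorem stmt1 (m Ω : ℝ) (hm : 0 < m) (f f' : ℝ → ℝ)
    (hderiv : ∀ t < Ω, HasDerivAt f (f' t) t)
    (hineq : ∀ t < Ω, (2 / m) * (f t) ^ 2 ≤ f' t) :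
    ∀ t < Ω, 0 ≤ f t := by
  intro t₀ ht₀
  by_contra hneg
  push_neg at hneg
  set c := 2 / m with hc
  have hc0 : 0 < c := by positivity
  -- f is monotone on (-∞, Ω) since f' ≥ c f² ≥ 0
  have hmono : MonotoneOn f (Set.Iio Ω) := by
    apply monotoneOn_of_deriv_nonneg (convex_Iio Ω)
    · exact fun x hx => (hderiv x hx).continuousAt.continuousWithinAt
    · intro x hx
      rw [interior_Iio] at hx
      exact (hderiv x hx).differentiableAt.differentiableWithinAt
    · intro x hx
      rw [interior_Iio] at hx
      rw [(hderiv x hx).deriv]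
      have h1 := hineq x hx
      nlinarith [sq_nonneg (f x)]
  have hfneg : ∀ s ≤ t₀, f s < 0 := by
    intro s hs
    exact lt_of_le_of_lt (hmono (lt_of_le_of_lt hs ht₀) ht₀ hs) hneg
  -- g = 1/f + c t is antitone on (-∞, t₀]
  set g : ℝ → ℝ := fun t => (f t)⁻¹ + c * t with hg
  have hdg : ∀ x < t₀, HasDerivAt g (-f' x / (f x) ^ 2 + c) x := by
    intro x hx
    have hxΩ : x < Ω := lt_trans hx ht₀
    have hfx : f x < 0 := hfneg x hx.le
    have := ((hderiv x hxΩ).inv (ne_of_lt hfx)).add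
      ((hasDerivAt_id x).const_mul c)
    exact this.congr_deriv (by ring)
  have hganti : AntitoneOn g (Set.Iic t₀) := by
    apply antitoneOn_of_deriv_nonpos (convex_Iic t₀)
    · apply ContinuousOn.add
      · apply ContinuousOn.inv₀
        · exact fun x hx =>
            (hderiv x (lt_of_le_of_lt hx ht₀)).continuousAt.continuousWithinAt
        · exact fun x hx => ne_of_lt (hfneg x hx)
      · exact (continuous_const.mul continuous_id).continuousOn
    · intro x hx
      rw [interior_Iic] at hx
      exact (hdg x hx).differentiableAt.differentiableWithinAt
    · intro x hx
      rw [interior_Iic] at hx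
      have hxΩ : x < Ω := lt_trans hx ht₀
      have hfx : f x < 0 := hfneg x hx.le
      rw [(hdg x hx).deriv]
      have h1 := hineq x hxΩ
      have h2 : (0:ℝ) < (f x) ^ 2 := by nlinarith
      have h3 : -f' x / (f x) ^ 2 ≤ -c := by
        rw [div_le_iff₀ h2]
        nlinarith
      linarith
  -- derive contradiction at T = t₀ - (1 - (f t₀)⁻¹)/c
  set T := t₀ - (1 - (f t₀)⁻¹) / c with hT
  have hft₀ : (f t₀)⁻¹ < 0 := inv_neg''.mpr hneg
  have hTle : T ≤ t₀ := by
    have h4 : 0 < (1 - (f t₀)⁻¹) / c := div_pos (by linarith) hc0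
    simp only [hT]
    linarith
  have hkey := hganti (Set.mem_Iic.mpr hTle) (Set.mem_Iic.mpr le_rfl) hTle
  have hfT : (f T)⁻¹ < 0 := inv_neg''.mpr (hfneg T hTle)
  have hcT : c * T = c * t₀ - (1 - (f t₀)⁻¹) := by
    rw [hT, mul_sub, mul_div_cancel₀ _ hc0.ne']
  simp only [hg] at hkey
  nlinarith
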